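/- If Z is a random variable with CDF F(z) = z − √(z(1−z))·arcsin(√z) on [0,1], then E[Z] = 1/2 + π²/32; consequently the ratio of E[Z] to the mean 1/2 of a uniform [0,1] random variable equals 1 + π²/16. -/

import Mathlib

open MeasureTheory Real Set

noncomputable def Fcdf (z : ℝ) : ℝ := z - Real.sqrt (z*(1-z)) * Real.arcsin (Real.sqrt z)

noncomputable def Ganti (t : ℝ) : ℝ :=
  t - t^2/2 + (Real.arcsin (Real.sqrt t))^2/8
    - Real.arcsin (Real.sqrt t) * (Real.sqrt (t*(1-t)) * (1-2*t))/4
    - (1 - 8*t + 8*t^2)/64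

lemma Fcdf_nonneg {t : ℝ} (ht0 : 0 < t) (ht1 : t ≤ 1) : 0 ≤ Fcdf t := by
  rcases eq_or_lt_of_le ht1 with h1 | h1
  · subst h1
    simp [Fcdf]
  · have hu : 0 < Real.sqrt t := Real.sqrt_pos.mpr ht0
    have hv : 0 < Real.sqrt (1 - t) := Real.sqrt_pos.mpr (by linarith)
    have hu1 : Real.sqrt t < 1 := by
      have := Real.sqrt_lt_sqrt ht0.le h1
      simpa using this
    have harc : Real.arcsin (Real.sqrt t) ≤ Real.sqrt t / Real.sqrt (1 - t) := by
      have hle := Real.le_tan (Real.arcsin_nonneg.mpr hu.le)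
        (Real.arcsin_lt_pi_div_two.mpr hu1)
      rwa [Real.tan_arcsin, Real.sq_sqrt ht0.le] at hle
    have hs : Real.sqrt (t*(1-t)) = Real.sqrt t * Real.sqrt (1-t) :=
      Real.sqrt_mul ht0.le _
    have key : Real.sqrt (t*(1-t)) * Real.arcsin (Real.sqrt t) ≤ t := by
      calc Real.sqrt (t*(1-t)) * Real.arcsin (Real.sqrt t)
          ≤ Real.sqrt (t*(1-t)) * (Real.sqrt t / Real.sqrt (1-t)) := by
            apply mul_le_mul_of_nonneg_left harc (Real.sqrt_nonneg _)
        _ = t := by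
            rw [hs]
            field_simp
            rw [Real.sq_sqrt ht0.le]
    simpa [Fcdf] using key

lemma Fcdf_le_one {t : ℝ} (ht0 : 0 ≤ t) (ht1 : t ≤ 1) : Fcdf t ≤ 1 := by
  have h1 : 0 ≤ Real.sqrt (t*(1-t)) * Real.arcsin (Real.sqrt t) :=
    mul_nonneg (Real.sqrt_nonneg _) (Real.arcsin_nonneg.mpr (Real.sqrt_nonneg _))
  simp only [Fcdf]; linarith

lemma Ganti_hasDerivAt {x : ℝ} (hx0 : 0 < x) (hx1 : x < 1) :
    HasDerivAt Ganti (1 - (x - Real.sqrt (x*(1-x)) * Real.arcsin (Real.sqrt x))) x := by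
  have hu : 0 < Real.sqrt x := Real.sqrt_pos.mpr hx0
  have hv : 0 < Real.sqrt (1 - x) := Real.sqrt_pos.mpr (by linarith)
  have hu1 : Real.sqrt x < 1 := by
    have := Real.sqrt_lt_sqrt hx0.le hx1
    simpa using this
  have hxx : 0 < x * (1 - x) := mul_pos hx0 (by linarith)
  have hs : 0 < Real.sqrt (x*(1-x)) := Real.sqrt_pos.mpr hxx
  have hsq : HasDerivAt (fun t : ℝ => Real.sqrt t) (1/(2*Real.sqrt x)) x :=
    Real.hasDerivAt_sqrt hx0.ne'
  have harc : HasDerivAt (fun t : ℝ => Real.arcsin (Real.sqrt t))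
      (1/Real.sqrt (1-x) * (1/(2*Real.sqrt x))) x := by
    have h := (Real.hasDerivAt_arcsin (by linarith : Real.sqrt x ≠ -1)
      hu1.ne).comp x hsq
    simpa [Real.sq_sqrt hx0.le, Function.comp_def] using h
  have hinner : HasDerivAt (fun t : ℝ => t*(1-t)) (1-2*x) x := by
    have h := (hasDerivAt_id x).mul ((hasDerivAt_const x (1:ℝ)).sub (hasDerivAt_id x))
    exact h.congr_deriv (by simp only [Pi.sub_apply, id_eq]; ring)
  have hsqr : HasDerivAt (fun t : ℝ => Real.sqrt (t*(1-t)))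
      (1/(2*Real.sqrt (x*(1-x))) * (1-2*x)) x :=
    (Real.hasDerivAt_sqrt hxx.ne').comp x hinner
  set a := Real.arcsin (Real.sqrt x) with ha
  set s := Real.sqrt (x*(1-x)) with hsdef
  set a' := 1/Real.sqrt (1-x) * (1/(2*Real.sqrt x)) with ha'
  set s' := 1/(2*s) * (1-2*x) with hs'
  have hG : HasDerivAt Ganti
      (1 - 2*x/2 + (2*a*a')/8 - (a' * (s * (1-2*x)) + a * (s' * (1-2*x) + s * (-2)))/4
        - (-8 + 8*(2*x))/64) x := by
    apply HasDerivAt.sub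
    apply HasDerivAt.sub
    apply HasDerivAt.add
    · exact (hasDerivAt_id x).sub (((hasDerivAt_pow 2 x).div_const 2).congr_deriv (by
        push_cast; ring))
    · have : HasDerivAt (fun t => (Real.arcsin (Real.sqrt t))^2) (2*a*a') x := by
        have := (harc.pow 2)
        exact this.congr_deriv (by rw [ha]; push_cast; ring)
      exact this.div_const 8
    · have hlin : HasDerivAt (fun t : ℝ => 1-2*t) (-2 : ℝ) x := by
        have h := (hasDerivAt_const x (1:ℝ)).sub ((hasDerivAt_const x (2:ℝ)).mul (hasDerivAt_id x))
        exact h.congr_deriv (by simp only [id_eq]; ring)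
      have hmul : HasDerivAt (fun t => Real.sqrt (t*(1-t)) * (1-2*t))
          (s' * (1-2*x) + s * (-2)) x := by
        exact hsqr.mul hlin
      have := harc.mul hmul
      exact this.div_const 4
    · have h : HasDerivAt (fun t : ℝ => 1 - 8*t + 8*t^2) (-8 + 8*(2*x)) x := by
        have h1 := ((hasDerivAt_const x (1:ℝ)).sub ((hasDerivAt_const x (8:ℝ)).mul
          (hasDerivAt_id x))).add ((hasDerivAt_const x (8:ℝ)).mul (hasDerivAt_pow 2 x))
        exact h1.congr_deriv (by simp only [id_eq]; push_cast; ring)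
      exact h.div_const 64
  convert hG using 1
  have hsuv : s = Real.sqrt x * Real.sqrt (1-x) := Real.sqrt_mul hx0.le _
  have hu2 : Real.sqrt x ^ 2 = x := Real.sq_sqrt hx0.le
  have hv2 : Real.sqrt (1-x) ^ 2 = 1 - x := Real.sq_sqrt (by linarith)
  have hs2 : s^2 = x*(1-x) := Real.sq_sqrt hxx.le
  have ha'' : a' = 1/(2*s) := by
    rw [ha', hsuv]; field_simp
  rw [ha'', hs']
  field_simp
  ring_nf
  linear_combination (2048*a) * hs2

lemma integrand_continuous : Continuous
    (fun t : ℝ => 1 - (t - Real.sqrt (t*(1-t)) * Real.arcsin (Real.sqrt t))) := by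
  continuity

lemma key_integral :
    ∫ t in (0:ℝ)..1, (1 - (t - Real.sqrt (t*(1-t)) * Real.arcsin (Real.sqrt t)))
      = 1/2 + π^2/32 := by
  have hcont : ContinuousOn Ganti (Icc 0 1) := by
    apply Continuous.continuousOn
    unfold Ganti
    continuity
  have hftc := intervalIntegral.integral_eq_sub_of_hasDeriv_right_of_le
    (f := Ganti) (a := 0) (b := 1)
    (f' := fun t => 1 - (t - Real.sqrt (t*(1-t)) * Real.arcsin (Real.sqrt t)))
    zero_le_one hcont
    (fun x hx => ((Ganti_hasDerivAt hx.1 hx.2).hasDerivWithinAt))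
    (integrand_continuous.intervalIntegrable 0 1)
  rw [hftc]
  have h0 : Ganti 0 = -(1/64) := by
    simp [Ganti]
  have h1 : Ganti 1 = 1/2 + π^2/32 - 1/64 := by
    simp [Ganti, Real.sqrt_one, Real.arcsin_one]
    ring
  rw [h0, h1]; ring

/-- If Z has CDF F(z) = z − √(z(1−z))·arcsin(√z) on [0,1], then
E[Z] = 1/2 + π²/32, and (E[Z])/(1/2) = 1 + π²/16. -/
theorem mean_of_compensated_cdf
    {Ω : Type*} [MeasurableSpace Ω] (μ : Measure Ω) [IsProbabilityMeasure μ]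
    (Z : Ω → ℝ) (hmZ : Measurable Z)
    (hrange : ∀ᵐ ω ∂μ, Z ω ∈ Icc (0:ℝ) 1)
    (hcdf : ∀ z ∈ Icc (0:ℝ) 1,
      μ {ω | Z ω ≤ z}
        = ENNReal.ofReal (z - Real.sqrt (z*(1-z)) * Real.arcsin (Real.sqrt z))) :
    (∫ ω, Z ω ∂μ) = 1/2 + π^2/32
    ∧ (∫ ω, Z ω ∂μ) / (1/2) = 1 + π^2/16 := by
  have hnn : 0 ≤ᵐ[μ] Z := by filter_upwards [hrange] with ω h using h.1
  have hbd : ∀ᵐ ω ∂μ, ‖Z ω‖ ≤ 1 := by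
    filter_upwards [hrange] with ω h
    rw [Real.norm_eq_abs, abs_le]; exact ⟨by linarith [h.1], h.2⟩
  have hint : Integrable Z μ :=
    Integrable.mono' (integrable_const 1) hmZ.aestronglyMeasurable hbd
  have hmain : (∫ ω, Z ω ∂μ) = 1/2 + π^2/32 := by
    rw [hint.integral_eq_integral_meas_lt hnn]
    have htail : ∫ t in Ioi (0:ℝ), ENNReal.toReal (μ {a | t < Z a})
        = ∫ t in Ioc (0:ℝ) 1, ENNReal.toReal (μ {a | t < Z a}) := by
      rw [setIntegral_eq_of_subset_of_ae_diff_eq_zero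
        nullMeasurableSet_Ioi Ioc_subset_Ioi_self ?_]
      apply Filter.Eventually.of_forall (fun t ht => ?_)
      have ht1 : 1 < t := by
        simp only [mem_diff, mem_Ioi, mem_Ioc, not_and, not_le] at ht
        exact ht.2 ht.1
      have : μ {a | t < Z a} = 0 := by
        apply measure_mono_null (s := {a | t < Z a}) (t := {a | Z a ∉ Icc (0:ℝ) 1}) ?_ ?_
        · intro a ha
          simp only [mem_setOf_eq] at ha ⊢
          intro hmem
          exact absurd hmem.2 (by linarith)
        · rw [measure_eq_zero_iff_ae_notMem]
          filter_upwards [hrange] with a ha using not_not_intro ha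
      simp [this]
    simp only [measureReal_def]
    rw [htail]
    have hcongr : ∫ t in Ioc (0:ℝ) 1, ENNReal.toReal (μ {a | t < Z a})
        = ∫ t in Ioc (0:ℝ) 1, (1 - (t - Real.sqrt (t*(1-t)) * Real.arcsin (Real.sqrt t))) := by
      apply setIntegral_congr_fun measurableSet_Ioc
      intro t ht
      dsimp only
      have hF0 : 0 ≤ Fcdf t := Fcdf_nonneg ht.1 ht.2
      have hF1 : Fcdf t ≤ 1 := Fcdf_le_one ht.1.le ht.2
      have hcompl : {a | t < Z a} = {a | Z a ≤ t}ᶜ := by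
        ext a; simp [not_le]
      rw [hcompl, measure_compl (measurableSet_le hmZ measurable_const) (measure_ne_top μ _),
        hcdf t ⟨ht.1.le, ht.2⟩, measure_univ]
      have : ENNReal.ofReal (t - Real.sqrt (t*(1-t)) * Real.arcsin (Real.sqrt t))
          = ENNReal.ofReal (Fcdf t) := rfl
      rw [this, ENNReal.toReal_sub_of_le (by
          rw [← ENNReal.ofReal_one]
          exact ENNReal.ofReal_le_ofReal hF1) ENNReal.one_ne_top,
        ENNReal.toReal_ofReal hF0, ENNReal.toReal_one]
      rfl
    rw [hcongr, ← intervalIntegral.integral_of_le zero_le_one, key_integral]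
  refine ⟨hmain, ?_⟩
  rw [hmain]; ring
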